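/- Let F : M → N be a smooth surjective submersion and let μ : M → ℝ be a smooth function. Then there exists a smooth function ν : N → ℝ such that for every m ∈ M with the property that μ is constant on the fiber F⁻¹({F(m)}), one has ν(F(m)) = μ(m). -/

import Mathlib

open scoped Manifold
open Set Function Filter Topology

/-- Local smooth sections of a submersion: near any point of the base there is a smooth
local section through a given point of the fiber. -/
theorem exists_local_section_aux
    {EM : Type*} [NormedAddCommGroup EM] [NormedSpace ℝ EM] [FiniteDimensional ℝ EM]
    {HM : Type*} [TopologicalSpace HM] {IM : ModelWithCorners ℝ EM HM} [IM.Boundaryless]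
    {M : Type*} [TopologicalSpace M] [ChartedSpace HM M] [IsManifold IM (⊤ : ℕ∞) M]
    {EN : Type*} [NormedAddCommGroup EN] [NormedSpace ℝ EN] [FiniteDimensional ℝ EN]
    {HN : Type*} [TopologicalSpace HN] {IN : ModelWithCorners ℝ EN HN} [IN.Boundaryless]
    {N : Type*} [TopologicalSpace N] [ChartedSpace HN N] [IsManifold IN (⊤ : ℕ∞) N]
    (F : M → N) (hF : ContMDiff IM IN (⊤ : ℕ∞) F)
    (hFsub : ∀ m : M, Function.Surjective (mfderiv IM IN F m))
    (m : M) :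
    ∃ (U : Set N) (s : N → M), IsOpen U ∧ F m ∈ U ∧ ContMDiffOn IN IM (⊤ : ℕ∞) s U ∧
      ∀ y ∈ U, F (s y) = y := by
  classical
  set φ : PartialEquiv M EM := extChartAt IM m with hφ
  set ψ : PartialEquiv N EN := extChartAt IN (F m) with hψ
  set x₀ : EM := φ m with hx₀
  set w : EM → EN := fun x => ψ (F (φ.symm x)) with hwdef
  -- the open set where the written map is smooth
  set O : Set EM := φ.target ∩ φ.symm ⁻¹' (F ⁻¹' ψ.source) with hOdef
  have hO : IsOpen O := by
    apply (continuousOn_extChartAt_symm m).isOpen_inter_preimage (isOpen_extChartAt_target m)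
    exact (isOpen_extChartAt_source (F m)).preimage hF.continuous
  have hx₀O : x₀ ∈ O := by
    constructor
    · exact mem_extChartAt_target m
    · show φ.symm x₀ ∈ F ⁻¹' ψ.source
      rw [hx₀, extChartAt_to_inv]
      exact mem_extChartAt_source (F m)
  have hsymmx₀ : φ.symm x₀ = m := extChartAt_to_inv m
  -- smoothness of written map on O
  have hwO : ContDiffOn ℝ ((⊤ : ℕ∞) : WithTop ℕ∞) w O := by
    have hA : ContMDiffOn 𝓘(ℝ, EM) IN (⊤ : ℕ∞) (F ∘ φ.symm) O :=
      hF.comp_contMDiffOn ((contMDiffOn_extChartAt_symm m).mono inter_subset_left)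
    have hB : ContMDiffOn 𝓘(ℝ, EM) 𝓘(ℝ, EN) (⊤ : ℕ∞) (ψ ∘ (F ∘ φ.symm)) O := by
      refine (contMDiffOn_extChartAt (n := (⊤ : ℕ∞))).comp hA ?_
      intro x hx
      rw [← extChartAt_source IN]
      exact hx.2
    exact hB.contDiffOn
  have hwx : ∀ x ∈ O, ContDiffAt ℝ ((⊤ : ℕ∞) : WithTop ℕ∞) w x := fun x hx => hwO.contDiffAt (hO.mem_nhds hx)
  -- derivative of the written map is surjective at x₀
  set L : EM →L[ℝ] EN := fderiv ℝ w x₀ with hL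
  have hmd : MDifferentiableAt IM IN F m := hF.mdifferentiableAt (by simp)
  have hLsurj : Function.Surjective L := by
    have h := hFsub m
    rw [hmd.mfderiv, IM.range_eq_univ, fderivWithin_univ] at h
    exact h
  -- complement of the kernel
  set K : Submodule ℝ EM := LinearMap.ker (L : EM →ₗ[ℝ] EN) with hKdef
  obtain ⟨p, hp⟩ : K.ClosedComplemented :=
    ContinuousLinearMap.ker_closedComplemented_of_finiteDimensional_range L
  -- the auxiliary map and its invertible derivative
  set Φ : EM → EN × K := fun x => (w x, p x) with hΦdef
  set Φ' : EM →L[ℝ] EN × K := L.prod p with hΦ'def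
  have hΦ'bij : Function.Bijective Φ' := by
    constructor
    · intro a b hab
      have h1 : L (a - b) = 0 := by
        have := congrArg Prod.fst hab
        simp only [Φ', ContinuousLinearMap.prod_apply] at this
        simp [map_sub, this]
      have h2 : p (a - b) = 0 := by
        have := congrArg Prod.snd hab
        simp only [Φ', ContinuousLinearMap.prod_apply] at this
        simp [map_sub, this]
      have hmem : a - b ∈ K := h1
      have h3 : (⟨a - b, hmem⟩ : K) = 0 := by
        rw [← hp ⟨a - b, hmem⟩]; exact h2
      have h4 : a - b = 0 := congrArg Subtype.val h3
      exact sub_eq_zero.mp h4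
    · rintro ⟨y, k⟩
      obtain ⟨u, hu⟩ := hLsurj y
      refine ⟨(k : EM) + (u - (p u : EM)), ?_⟩
      have hk0 : L (k : EM) = 0 := k.2
      have hpu0 : L ((p u : K) : EM) = 0 := (p u).2
      have hpk : p (k : EM) = k := hp k
      have hppu : p ((p u : K) : EM) = p u := hp (p u)
      refine Prod.ext ?_ ?_
      · show L _ = y
        simp only [map_add, map_sub, hk0, hu, hpu0]
        abel
      · show p _ = k
        simp only [map_add, map_sub, hpk, hppu]
        abel

  -- upgrade to a continuous linear equivalence
  set e : EM ≃L[ℝ] EN × K :=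
    (LinearEquiv.ofBijective (Φ' : EM →ₗ[ℝ] EN × K) hΦ'bij).toContinuousLinearEquiv with hedef
  have hecoe : (e : EM →L[ℝ] EN × K) = Φ' := by
    ext x <;> rfl
  have hn1 : ((⊤ : ℕ∞) : WithTop ℕ∞) ≠ 0 := by simp
  -- smoothness of Φ on O and the derivative facts
  have hΦO : ContDiffOn ℝ ((⊤ : ℕ∞) : WithTop ℕ∞) Φ O := hwO.prodMk (p.contDiff.contDiffOn)
  have hΦx : ∀ x ∈ O, ContDiffAt ℝ ((⊤ : ℕ∞) : WithTop ℕ∞) Φ x := fun x hx => hΦO.contDiffAt (hO.mem_nhds hx)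
  have hΦderiv : HasFDerivAt Φ ((e : EM →L[ℝ] EN × K)) x₀ := by
    rw [hecoe]
    exact (((hwx x₀ hx₀O).differentiableAt hn1).hasFDerivAt).prodMk p.hasFDerivAt
  -- the partial homeomorphism from the inverse function theorem
  set P : OpenPartialHomeomorph EM (EN × K) :=
    (hΦx x₀ hx₀O).toOpenPartialHomeomorph Φ hΦderiv hn1 with hPdef
  have hPcoe : ⇑P = Φ := rfl
  have hx₀P : x₀ ∈ P.source := (hΦx x₀ hx₀O).mem_toOpenPartialHomeomorph_source hΦderiv hn1
  have hΦx₀P : Φ x₀ ∈ P.target := (hΦx x₀ hx₀O).image_mem_toOpenPartialHomeomorph_target hΦderiv hn1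
  have hfΦx₀ : fderiv ℝ Φ x₀ = (e : EM →L[ℝ] EN × K) := hΦderiv.fderiv
  -- the open set where the derivative of Φ is invertible
  set O' : Set EM := O ∩ {x | IsUnit ((e.symm : EN × K →L[ℝ] EM).comp (fderiv ℝ Φ x))} with hO'def
  have hO' : IsOpen O' := by
    have hc : ContinuousOn (fun x => (e.symm : EN × K →L[ℝ] EM).comp (fderiv ℝ Φ x)) O := by
      have h1 : ContinuousOn (fderiv ℝ Φ) O :=
        hΦO.continuousOn_fderiv_of_isOpen hO (by exact_mod_cast le_top)
      exact ((ContinuousLinearMap.compL ℝ EM (EN × K) EM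
        (e.symm : EN × K →L[ℝ] EM)).continuous).comp_continuousOn h1
    exact hc.isOpen_inter_preimage hO Units.isOpen
  have hx₀O' : x₀ ∈ O' := by
    refine ⟨hx₀O, ?_⟩
    show IsUnit ((e.symm : EN × K →L[ℝ] EM).comp (fderiv ℝ Φ x₀))
    rw [hfΦx₀]
    have : (e.symm : EN × K →L[ℝ] EM).comp (e : EM →L[ℝ] EN × K) = ContinuousLinearMap.id ℝ EM := by
      ext x; simp
    rw [this]
    exact isUnit_one
  -- for x in O', the derivative of Φ at x is a continuous linear equivalence
  have hinv : ∀ x ∈ O', ∃ ex : EM ≃L[ℝ] EN × K, (ex : EM →L[ℝ] EN × K) = fderiv ℝ Φ x := by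
    intro x hx
    have hu := hx.2
    have hbij : Function.Bijective (fderiv ℝ Φ x) := by
      obtain ⟨u, hu⟩ := hu
      have hucoe : Function.Bijective
          ((e.symm : EN × K →L[ℝ] EM).comp (fderiv ℝ Φ x)) := by
        rw [← hu]
        exact (ContinuousLinearEquiv.ofUnit u).bijective
      constructor
      · intro a b h
        exact hucoe.1 (by simp [ContinuousLinearMap.comp_apply, h])
      · intro y
        obtain ⟨a, ha⟩ := hucoe.2 (e.symm y)
        refine ⟨a, ?_⟩
        have := congrArg e ha
        simpa using this
    refine ⟨(LinearEquiv.ofBijective ((fderiv ℝ Φ x) : EM →ₗ[ℝ] EN × K)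
      hbij).toContinuousLinearEquiv, ?_⟩
    ext z <;> rfl
  -- the candidate open set in N and candidate section
  set g : N → EN × K := fun y => (ψ y, p x₀) with hgdef
  set T : Set (EN × K) := P.target ∩ P.symm ⁻¹' O' with hTdef
  have hT : IsOpen T := P.continuousOn_symm.isOpen_inter_preimage P.open_target hO'
  set V : Set N := ψ.source ∩ g ⁻¹' T with hVdef
  have hgcont : ContinuousOn g ψ.source :=
    (continuousOn_extChartAt (F m)).prodMk continuousOn_const
  have hV : IsOpen V := hgcont.isOpen_inter_preimage (isOpen_extChartAt_source (F m)) hT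
  have hgFm : g (F m) = Φ x₀ := by
    have : ψ (F m) = w x₀ := by
      rw [hwdef]; simp only [hsymmx₀]
    simp only [hgdef, hΦdef, this]
  have hFmV : F m ∈ V := by
    refine ⟨mem_extChartAt_source (F m), ?_⟩
    show g (F m) ∈ T
    rw [hgFm]
    refine ⟨hΦx₀P, ?_⟩
    show P.symm (Φ x₀) ∈ O'
    have : P.symm (Φ x₀) = x₀ := by
      rw [← hPcoe]; exact P.left_inv hx₀P
    rw [this]; exact hx₀O'
  -- the section
  set s : N → M := fun y => φ.symm (P.symm (g y)) with hsdef
  refine ⟨V, s, hV, hFmV, ?_, ?_⟩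
  · -- smoothness of the section on V
    intro y hy
    have hgy : g y ∈ T := hy.2
    have hxy : P.symm (g y) ∈ O' := hgy.2
    have hxyO : P.symm (g y) ∈ O := hxy.1
    obtain ⟨ex, hex⟩ := hinv _ hxy
    -- smoothness of P.symm at g y
    have hPsymm : ContDiffAt ℝ ((⊤ : ℕ∞) : WithTop ℕ∞) P.symm (g y) := by
      refine P.contDiffAt_symm (f₀' := ex) hgy.1 ?_ ?_
      · rw [hex]
        exact ((hΦx _ hxyO).differentiableAt hn1).hasFDerivAt
      · exact hΦx _ hxyO
    have h1 : ContMDiffAt IN 𝓘(ℝ, EN × K) (⊤ : ℕ∞) g y := by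
      refine ContMDiffAt.prodMk_space ?_ contMDiffAt_const
      refine (contMDiffOn_extChartAt (n := (⊤ : ℕ∞))).contMDiffAt
        ((chartAt HN (F m)).open_source.mem_nhds ?_)
      rw [← extChartAt_source IN]
      exact hy.1
    have h2 : ContMDiffAt 𝓘(ℝ, EN × K) 𝓘(ℝ, EM) (⊤ : ℕ∞) P.symm (g y) := hPsymm.contMDiffAt
    have h3 : ContMDiffAt 𝓘(ℝ, EM) IM (⊤ : ℕ∞) φ.symm (P.symm (g y)) := by
      refine (contMDiffOn_extChartAt_symm m).contMDiffAt ?_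
      exact (isOpen_extChartAt_target m).mem_nhds hxyO.1
    exact ((h3.comp y (h2.comp y h1)).contMDiffWithinAt)
  · -- section property
    intro y hy
    have hgy : g y ∈ T := hy.2
    have hxy : P.symm (g y) ∈ O' := hgy.2
    have hxyO : P.symm (g y) ∈ O := hxy.1
    have hΦeq : Φ (P.symm (g y)) = g y := by
      rw [← hPcoe]; exact P.right_inv hgy.1
    have hw_eq : w (P.symm (g y)) = ψ y := congrArg Prod.fst hΦeq
    have hFs : F (φ.symm (P.symm (g y))) ∈ ψ.source := hxyO.2
    have : ψ.symm (w (P.symm (g y))) = F (φ.symm (P.symm (g y))) := by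
      rw [hwdef]
      exact (extChartAt IN (F m)).left_inv hFs
    rw [hsdef]
    show F (φ.symm (P.symm (g y))) = y
    rw [← this, hw_eq]
    exact (extChartAt IN (F m)).left_inv hy.1

/-- Lemma about the extension of a function (smooth version): if `F : M → N` is a smooth
surjective submersion between finite-dimensional smooth manifolds without boundary and
`μ : M → ℝ` is smooth, then there is a smooth function `ν : N → ℝ` such that `ν (F m) = μ m`
whenever `μ` is constant on the fiber of `F` through `m`. -/
theorem extension_of_function_smooth
    {EM : Type*} [NormedAddCommGroup EM] [NormedSpace ℝ EM] [FiniteDimensional ℝ EM]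
    {HM : Type*} [TopologicalSpace HM] {IM : ModelWithCorners ℝ EM HM} [IM.Boundaryless]
    {M : Type*} [TopologicalSpace M] [ChartedSpace HM M] [IsManifold IM (⊤ : ℕ∞) M]
    [T2Space M] [SecondCountableTopology M]
    {EN : Type*} [NormedAddCommGroup EN] [NormedSpace ℝ EN] [FiniteDimensional ℝ EN]
    {HN : Type*} [TopologicalSpace HN] {IN : ModelWithCorners ℝ EN HN} [IN.Boundaryless]
    {N : Type*} [TopologicalSpace N] [ChartedSpace HN N] [IsManifold IN (⊤ : ℕ∞) N]
    [T2Space N] [SecondCountableTopology N]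
    (F : M → N) (hF : ContMDiff IM IN (⊤ : ℕ∞) F) (hFsurj : Function.Surjective F)
    (hFsub : ∀ m : M, Function.Surjective (mfderiv IM IN F m))
    (μ : M → ℝ) (hμ : ContMDiff IM 𝓘(ℝ, ℝ) (⊤ : ℕ∞) μ) :
    ∃ ν : N → ℝ, ContMDiff IN 𝓘(ℝ, ℝ) (⊤ : ℕ∞) ν ∧
      ∀ m : M, (∀ m' : M, F m' = F m → μ m' = μ m) → ν (F m) = μ m := by
  classical
  -- instances needed for partitions of unity on N
  haveI : LocallyCompactSpace HN := IN.locallyCompactSpace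
  haveI : LocallyCompactSpace N := ChartedSpace.locallyCompactSpace HN N
  -- choose local sections through preimages
  have hsec : ∀ n : N, ∃ (U : Set N) (s : N → M), IsOpen U ∧ n ∈ U ∧
      ContMDiffOn IN IM (⊤ : ℕ∞) s U ∧ ∀ y ∈ U, F (s y) = y := by
    intro n
    obtain ⟨m, rfl⟩ := hFsurj n
    exact exists_local_section_aux F hF hFsub m
  choose U s hUo hUn hss hsF using hsec
  -- a smooth partition of unity subordinate to the cover
  obtain ⟨f, hf⟩ := SmoothPartitionOfUnity.exists_isSubordinate (I := IN) isClosed_univ U hUo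
    (fun x _ => mem_iUnion.2 ⟨x, hUn x⟩)
  refine ⟨fun y => ∑ᶠ i, f i y • μ (s i y), ?_, ?_⟩
  · exact hf.contMDiff_finsum_smul hUo fun i => hμ.comp_contMDiffOn (hss i)
  · intro m hm
    have hterm : ∀ i, f i (F m) • μ (s i (F m)) = f i (F m) • μ m := by
      intro i
      by_cases h : f i (F m) = 0
      · rw [h, zero_smul, zero_smul]
      · have hmem : F m ∈ tsupport (f i) := subset_tsupport _ h
        have hmemU : F m ∈ U i := hf i hmem
        have : F (s i (F m)) = F m := hsF i _ hmemU
        rw [hm _ this]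
    show (∑ᶠ i, f i (F m) • μ (s i (F m))) = μ m
    rw [finsum_congr hterm]
    have hfin : (Function.support fun i => f i (F m)).Finite := by
      apply (f.locallyFinite.point_finite (F m)).subset
      intro i hi
      exact hi
    rw [← finsum_smul' hfin, f.sum_eq_one (mem_univ _), one_smul]
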